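/- Let E : L²(X,m) → [0,∞] be lower semicontinuous and compatible with the normal contractions x ↦ |x| and C_α(x) = (-α - x) ∨ x ∧ (α - x) for all α ≥ 0. Then E is convex. -/

import Mathlib

open MeasureTheory ENNReal Filter

noncomputable section CalphaHelpers

/-- The contraction `C_α`. -/
def Cfun (α : ℝ) : ℝ → ℝ := fun x => max (-α - x) (min x (α - x))

lemma lip_const_sub (c : ℝ) : LipschitzWith 1 (fun x : ℝ => c - x) :=
  LipschitzWith.of_dist_le_mul fun x y => by
    simp only [Real.dist_eq, NNReal.coe_one, one_mul]
    rw [show c - x - (c - y) = -(x - y) by ring, abs_neg]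

lemma lipC (α : ℝ) : LipschitzWith 1 (Cfun α) := by
  have h1 : LipschitzWith 1 (fun x : ℝ => -α - x) := lip_const_sub (-α)
  have h2 : LipschitzWith 1 (fun x : ℝ => min x (α - x)) := by
    simpa using LipschitzWith.id.min (lip_const_sub α)
  have := h1.max h2
  rw [max_self] at this
  exact this

lemma C0 {α : ℝ} (hα : 0 ≤ α) : Cfun α 0 = 0 := by
  simp only [Cfun, sub_zero, min_self]
  rw [min_eq_left hα, max_eq_right (by linarith : -α ≤ 0)]

lemma Cabs {α : ℝ} (hα : 0 ≤ α) (x : ℝ) : |Cfun α x| ≤ |x| := by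
  have h := (lipC α).dist_le_mul x 0
  rw [C0 hα] at h
  simpa [Real.dist_eq] using h

lemma Ckey {β : ℝ} (hβ : 0 ≤ β) {x : ℝ} (hx : |x| ≤ 3 * β) :
    |Cfun (2 * β) x| ≤ β := by
  rw [abs_le] at hx ⊢
  obtain ⟨hx1, hx2⟩ := hx
  unfold Cfun
  constructor
  · rcases le_total x (-β) with h | h
    · exact le_trans (by linarith) (le_max_left _ _)
    · refine le_trans ?_ (le_max_right _ _)
      exact le_min (by linarith) (by linarith)
  · apply max_le (by linarith)
    rcases le_total x β with h | h
    · exact le_trans (min_le_left _ _) h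
    · exact le_trans (min_le_right _ _) (by linarith)

/-- The iterated contractions. -/
def Ffun (n : ℕ) : ℕ → ℝ → ℝ
  | 0 => id
  | (k + 1) => fun y => Cfun (2 * ((3:ℝ) ^ n / 3 ^ k)) (Ffun n k y)

lemma bpos (n k : ℕ) : (0:ℝ) < (3:ℝ) ^ n / 3 ^ k := by positivity

lemma Ffun_lip (n k : ℕ) : LipschitzWith 1 (Ffun n k) := by
  induction k with
  | zero => exact LipschitzWith.id
  | succ k ih => exact (by simpa using (lipC (2 * ((3:ℝ) ^ n / 3 ^ k))).comp ih : LipschitzWith 1 (Cfun (2 * ((3:ℝ) ^ n / 3 ^ k)) ∘ Ffun n k))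

lemma Ffun_abs_le (n : ℕ) : ∀ k y, |Ffun n k y| ≤ |y| := by
  intro k
  induction k with
  | zero => intro y; simp [Ffun]
  | succ k ih =>
    intro y
    exact le_trans (Cabs (le_of_lt (by positivity)) _) (ih y)

lemma Ffun_bound (n : ℕ) : ∀ k y, |y| ≤ 3 ^ (n + 1) →
    |Ffun n k y| ≤ 3 * ((3:ℝ) ^ n / 3 ^ k) := by
  intro k
  induction k with
  | zero =>
    intro y hy
    simpa [Ffun, pow_succ, mul_comm] using hy
  | succ k ih =>
    intro y hy
    have h1 : |Ffun n (k+1) y| ≤ (3:ℝ) ^ n / 3 ^ k :=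
      Ckey (le_of_lt (bpos n k)) (ih y hy)
    refine h1.trans (le_of_eq ?_)
    rw [pow_succ]
    field_simp

lemma Ffun_final_bound (n : ℕ) {y : ℝ} (hy : |y| ≤ 3 ^ (n + 1)) :
    |Ffun n (2 * n + 1) y| ≤ ((3:ℝ) ^ n)⁻¹ := by
  refine (Ffun_bound n (2 * n + 1) y hy).trans (le_of_eq ?_)
  have h3 : (3:ℝ) ^ (2 * n + 1) = 3 ^ n * 3 ^ n * 3 := by
    rw [two_mul, pow_add, pow_add]; ring
  rw [h3]
  have h0 : (3:ℝ) ^ n ≠ 0 := by positivity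
  field_simp

lemma Ffun_tendsto (y : ℝ) :
    Tendsto (fun n => Ffun n (2 * n + 1) y) atTop (nhds 0) := by
  apply squeeze_zero_norm' (a := fun n => ((3:ℝ) ^ n)⁻¹)
  · have h3 : Tendsto (fun n : ℕ => (3:ℝ) ^ n) atTop atTop :=
      tendsto_pow_atTop_atTop_of_one_lt (by norm_num)
    filter_upwards [h3.eventually_ge_atTop |y|] with n hn
    have hy : |y| ≤ 3 ^ (n + 1) := hn.trans (by
      have : (3:ℝ) ^ n ≤ 3 ^ (n+1) := by
        apply pow_le_pow_right₀ (by norm_num) (by omega)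
      linarith)
    simpa [Real.norm_eq_abs] using Ffun_final_bound n hy
  · have : Tendsto (fun n : ℕ => ((3:ℝ)⁻¹) ^ n) atTop (nhds 0) :=
      tendsto_pow_atTop_nhds_zero_of_lt_one (by norm_num) (by norm_num)
    simpa [inv_pow] using this

end CalphaHelpers
section LpPart

variable {X : Type*} [MeasurableSpace X] {μ : Measure X}

/-- Iterated application of the contractions on `Lp`. -/
noncomputable def ULp (μ : Measure X) (n : ℕ) : ℕ → Lp ℝ 2 μ → Lp ℝ 2 μ
  | 0, g => g
  | (k + 1), g => (lipC (2 * ((3:ℝ) ^ n / 3 ^ k))).compLp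
      (C0 (le_of_lt (by positivity))) (ULp μ n k g)

lemma ULp_coeFn (n : ℕ) (g : Lp ℝ 2 μ) :
    ∀ k, (ULp μ n k g : X → ℝ) =ᵐ[μ] fun a => Ffun n k (g a) := by
  intro k
  induction k with
  | zero => simp only [ULp, Ffun]; exact Filter.EventuallyEq.rfl
  | succ k ih =>
    have h1 := (lipC (2 * ((3:ℝ) ^ n / 3 ^ k))).coeFn_compLp
      (C0 (le_of_lt (by positivity))) (ULp μ n k g)
    refine h1.trans ?_
    filter_upwards [ih] with a ha
    simp only [Function.comp_apply, ha, Ffun]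

lemma lsc_le_liminf_seq {V : Type*} [TopologicalSpace V] {E : V → ℝ≥0∞}
    (hE : LowerSemicontinuous E) {x : ℕ → V} {x0 : V}
    (hx : Filter.Tendsto x Filter.atTop (nhds x0)) :
    E x0 ≤ Filter.liminf (fun n => E (x n)) Filter.atTop := by
  refine (hE.le_liminf x0).trans ?_
  have hmap : Filter.map x Filter.atTop ≤ nhds x0 := hx
  calc Filter.liminf E (nhds x0) ≤ Filter.liminf E (Filter.map x Filter.atTop) :=
        Filter.liminf_le_liminf_of_le hmap
    _ = Filter.liminf (fun n => E (x n)) Filter.atTop := by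
        rw [Filter.liminf, Filter.liminf, Filter.map_map]; rfl

lemma ULp_tendsto (g : Lp ℝ 2 μ) :
    Filter.Tendsto (fun n => ULp μ n (2 * n + 1) g) Filter.atTop (nhds (0 : Lp ℝ 2 μ)) := by
  rw [Lp.tendsto_Lp_iff_tendsto_eLpNorm']
  have hcong : ∀ n, eLpNorm ((ULp μ n (2 * n + 1) g : X → ℝ) - ((0 : Lp ℝ 2 μ) : X → ℝ)) 2 μ
      = eLpNorm (fun a => Ffun n (2 * n + 1) (g a)) 2 μ := by
    intro n
    apply eLpNorm_congr_ae
    filter_upwards [ULp_coeFn n g (2 * n + 1), Lp.coeFn_zero ℝ 2 μ] with a h1 h2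
    simp only [Pi.sub_apply, h1, h2, Pi.zero_apply, sub_zero]
  simp only [hcong]
  -- now prove eLpNorm tendsto 0 by dominated convergence
  have h2 : ∀ n, eLpNorm (fun a => Ffun n (2 * n + 1) (g a)) 2 μ
      = (∫⁻ a, (‖Ffun n (2 * n + 1) (g a)‖₊ : ℝ≥0∞) ^ (2:ℝ) ∂μ) ^ (1 / (2:ℝ)) := by
    intro n
    rw [eLpNorm_eq_lintegral_rpow_enorm_toReal (by norm_num) (by norm_num)]
    norm_num
    rfl
  simp only [h2]
  have hgmeas : AEMeasurable (fun a => (g : X → ℝ) a) μ := (Lp.aestronglyMeasurable g).aemeasurable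
  have hI : Filter.Tendsto
      (fun n => ∫⁻ a, (‖Ffun n (2 * n + 1) (g a)‖₊ : ℝ≥0∞) ^ (2:ℝ) ∂μ)
      Filter.atTop (nhds (∫⁻ _a, (0:ℝ≥0∞) ∂μ)) := by
    apply MeasureTheory.tendsto_lintegral_of_dominated_convergence'
      (bound := fun a => (‖(g : X → ℝ) a‖₊ : ℝ≥0∞) ^ (2:ℝ))
    · intro n
      apply AEMeasurable.pow_const
      exact (((Ffun_lip n (2*n+1)).continuous.measurable.comp_aemeasurable hgmeas)).enorm
    · intro n
      filter_upwards with a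
      have h := Ffun_abs_le n (2*n+1) (g a)
      gcongr
      rw [← NNReal.coe_le_coe]
      simpa [coe_nnnorm, Real.norm_eq_abs] using h
    · have := lintegral_rpow_enorm_lt_top_of_eLpNorm_lt_top (p := 2) (f := (g : X → ℝ))
        (by norm_num) (by norm_num) (Lp.eLpNorm_lt_top g)
      simp only [ENNReal.toReal_ofNat] at this
      exact this.ne
    · filter_upwards with a
      have hfa := Ffun_tendsto ((g : X → ℝ) a)
      have hc : Filter.Tendsto (fun r : ℝ => ((‖r‖₊ : ℝ≥0∞)) ^ (2:ℝ)) (nhds 0) (nhds 0) := by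
        have hcont : Continuous (fun r : ℝ => ((‖r‖₊ : ℝ≥0∞)) ^ (2:ℝ)) :=
          ENNReal.continuous_rpow_const.comp (ENNReal.continuous_coe.comp continuous_nnnorm)
        have := hcont.tendsto 0
        simpa [ENNReal.zero_rpow_of_pos] using this
      exact hc.comp hfa
  rw [lintegral_zero] at hI
  have hrpow : Filter.Tendsto (fun x : ℝ≥0∞ => x ^ (1/(2:ℝ))) (nhds 0) (nhds 0) := by
    have := (ENNReal.continuous_rpow_const (y := 1/(2:ℝ))).tendsto (0 : ℝ≥0∞)
    simpa [ENNReal.zero_rpow_of_pos] using this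
  exact hrpow.comp hI

end LpPart
section ZeroCompat

lemma zero_compat {X : Type*} [MeasurableSpace X] (μ : Measure X)
    (E : Lp ℝ 2 μ → ℝ≥0∞) (hE : LowerSemicontinuous E)
    (hCα : ∀ α : ℝ, 0 ≤ α →
      ∀ (h : LipschitzWith 1 (fun x : ℝ => max (-α - x) (min x (α - x))))
        (h0 : (fun x : ℝ => max (-α - x) (min x (α - x))) 0 = 0),
      ∀ f g : Lp ℝ 2 μ,
        E (f + h.compLp h0 g) + E (f - h.compLp h0 g) ≤ E (f + g) + E (f - g))
    (f g : Lp ℝ 2 μ) : E f + E f ≤ E (f + g) + E (f - g) := by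
  have chain : ∀ n k, E (f + ULp μ n k g) + E (f - ULp μ n k g)
      ≤ E (f + g) + E (f - g) := by
    intro n k
    induction k with
    | zero => exact le_refl _
    | succ k ih =>
      have step := hCα (2 * ((3:ℝ) ^ n / 3 ^ k)) (by positivity)
        (lipC (2 * ((3:ℝ) ^ n / 3 ^ k))) (C0 (le_of_lt (by positivity))) f (ULp μ n k g)
      exact le_trans step ih
  have hconv := ULp_tendsto (μ := μ) g
  have hφ : LowerSemicontinuous (fun z : Lp ℝ 2 μ => E (f + z) + E (f - z)) := by
    apply LowerSemicontinuous.add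
    · exact hE.comp (continuous_const.add continuous_id)
    · exact hE.comp (continuous_const.sub continuous_id)
  have h1 := lsc_le_liminf_seq hφ hconv
  have h2 : Filter.liminf
      (fun n => E (f + ULp μ n (2 * n + 1) g) + E (f - ULp μ n (2 * n + 1) g))
      Filter.atTop ≤ E (f + g) + E (f - g) :=
    le_trans Filter.liminf_le_limsup
      (Filter.limsup_le_of_le (h := Filter.Eventually.of_forall fun n => chain n (2 * n + 1)))
  simpa using h1.trans h2

end ZeroCompat
section Convexity

lemma convex_of_lsc_midpoint {V : Type*} [NormedAddCommGroup V] [NormedSpace ℝ V]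
    (E : V → ℝ≥0∞) (hE : LowerSemicontinuous E)
    (hmid : ∀ u v : V, E ((2⁻¹:ℝ) • (u + v)) + E ((2⁻¹:ℝ) • (u + v)) ≤ E u + E v) :
    ∀ f g : V, ∀ t : ℝ, 0 ≤ t → t ≤ 1 →
      E (t • f + (1 - t) • g) ≤ ENNReal.ofReal t * E f + ENNReal.ofReal (1 - t) * E g := by
  have step : ∀ (t₁ t₂ : ℝ) (f g : V), 0 ≤ t₁ → 0 ≤ t₂ → t₁ ≤ 1 → t₂ ≤ 1 →
      E (t₁ • f + (1 - t₁) • g) ≤ ENNReal.ofReal t₁ * E f + ENNReal.ofReal (1 - t₁) * E g →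
      E (t₂ • f + (1 - t₂) • g) ≤ ENNReal.ofReal t₂ * E f + ENNReal.ofReal (1 - t₂) * E g →
      E (((t₁ + t₂) / 2) • f + (1 - (t₁ + t₂) / 2) • g) ≤
        ENNReal.ofReal ((t₁ + t₂) / 2) * E f + ENNReal.ofReal (1 - (t₁ + t₂) / 2) * E g := by
    intro t₁ t₂ f g h10 h20 h11 h21 H₁ H₂
    have hm := hmid (t₁ • f + (1 - t₁) • g) (t₂ • f + (1 - t₂) • g)
    rw [show (2⁻¹:ℝ) • ((t₁ • f + (1 - t₁) • g) + (t₂ • f + (1 - t₂) • g)) =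
        ((t₁ + t₂) / 2) • f + (1 - (t₁ + t₂) / 2) • g by module] at hm
    set a := E (((t₁ + t₂) / 2) • f + (1 - (t₁ + t₂) / 2) • g) with ha
    set B := (ENNReal.ofReal t₁ * E f + ENNReal.ofReal (1 - t₁) * E g) +
      (ENNReal.ofReal t₂ * E f + ENNReal.ofReal (1 - t₂) * E g) with hB
    have h2 : a * 2 ≤ B := by
      calc a * 2 = a + a := by ring
        _ ≤ _ := le_trans hm (add_le_add H₁ H₂)
    have h3 : a ≤ B / 2 :=
      (ENNReal.le_div_iff_mul_le (Or.inl two_ne_zero) (Or.inl ENNReal.ofNat_ne_top)).mpr h2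
    refine h3.trans (le_of_eq ?_)
    have e1 : ENNReal.ofReal ((t₁ + t₂) / 2) = (ENNReal.ofReal t₁ + ENNReal.ofReal t₂) * 2⁻¹ := by
      rw [ENNReal.ofReal_div_of_pos (by norm_num), ENNReal.ofReal_add h10 h20,
        ENNReal.ofReal_ofNat, div_eq_mul_inv]
    have e2 : ENNReal.ofReal (1 - (t₁ + t₂) / 2) =
        (ENNReal.ofReal (1 - t₁) + ENNReal.ofReal (1 - t₂)) * 2⁻¹ := by
      rw [show (1 - (t₁ + t₂) / 2) = ((1 - t₁) + (1 - t₂)) / 2 by ring,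
        ENNReal.ofReal_div_of_pos (by norm_num),
        ENNReal.ofReal_add (by linarith) (by linarith), ENNReal.ofReal_ofNat, div_eq_mul_inv]
    rw [hB, e1, e2, div_eq_mul_inv]
    ring
  have dy : ∀ n k : ℕ, k ≤ 2 ^ n → ∀ f g : V,
      E (((k:ℝ) / 2 ^ n) • f + (1 - (k:ℝ) / 2 ^ n) • g) ≤
        ENNReal.ofReal ((k:ℝ) / 2 ^ n) * E f + ENNReal.ofReal (1 - (k:ℝ) / 2 ^ n) * E g := by
    intro n
    induction n with
    | zero =>
      intro k hk f g
      interval_cases k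
      · norm_num
      · norm_num
    | succ n ih =>
      intro k hk f g
      rcases Nat.even_or_odd k with ⟨m, hm⟩ | ⟨m, hm⟩
      · subst hm
        have hm2 : m ≤ 2 ^ n := by rw [pow_succ] at hk; omega
        have e : ((m + m : ℕ) : ℝ) / 2 ^ (n + 1) = (m:ℝ) / 2 ^ n := by
          push_cast; rw [pow_succ]; field_simp; ring
        rw [e]
        exact ih m hm2 f g
      · subst hm
        have h1 : m ≤ 2 ^ n := by rw [pow_succ] at hk; omega
        have h2 : m + 1 ≤ 2 ^ n := by rw [pow_succ] at hk; omega
        have hpow : (0:ℝ) < 2 ^ n := by positivity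
        have e : ((2 * m + 1 : ℕ) : ℝ) / 2 ^ (n + 1) =
            ((m:ℝ) / 2 ^ n + ((m + 1 : ℕ) : ℝ) / 2 ^ n) / 2 := by
          push_cast; rw [pow_succ]; field_simp; ring
        rw [e]
        refine step _ _ f g (by positivity) (by positivity) ?_ ?_ (ih m h1 f g) (ih (m+1) h2 f g)
        · rw [div_le_one hpow]
          exact_mod_cast (by exact_mod_cast h1 : ((m:ℕ):ℝ) ≤ ((2^n : ℕ):ℝ))
        · rw [div_le_one hpow]
          exact_mod_cast (by exact_mod_cast h2 : (((m+1):ℕ):ℝ) ≤ ((2^n : ℕ):ℝ))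
  intro f g t ht0 ht1
  rcases eq_or_lt_of_le ht0 with h0 | h0
  · rw [← h0]; simp
  rcases eq_or_lt_of_le ht1 with h1 | h1
  · rw [h1]; simp
  by_cases hf : E f = ⊤
  · rw [hf, ENNReal.mul_top (ne_of_gt (ENNReal.ofReal_pos.mpr h0)), top_add]
    exact le_top
  by_cases hg : E g = ⊤
  · rw [hg, ENNReal.mul_top (ne_of_gt (ENNReal.ofReal_pos.mpr (by linarith : (0:ℝ) < 1 - t))),
      add_top]
    exact le_top
  set s : ℕ → ℝ := fun n => (⌊t * 2 ^ n⌋₊ : ℝ) / 2 ^ n with hs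
  have hfloor_le : ∀ n : ℕ, (⌊t * 2 ^ n⌋₊ : ℝ) ≤ t * 2 ^ n := fun n => Nat.floor_le (by positivity)
  have hfloor_gt : ∀ n : ℕ, t * 2 ^ n - 1 < (⌊t * 2 ^ n⌋₊ : ℝ) := fun n => Nat.sub_one_lt_floor _
  have hsk : ∀ n : ℕ, ⌊t * 2 ^ n⌋₊ ≤ 2 ^ n := by
    intro n
    have hpow : (0:ℝ) < 2 ^ n := by positivity
    have : t * 2 ^ n ≤ ((2 ^ n : ℕ) : ℝ) := by push_cast; nlinarith
    calc ⌊t * 2 ^ n⌋₊ ≤ ⌊((2 ^ n : ℕ) : ℝ)⌋₊ := Nat.floor_mono this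
      _ = 2 ^ n := Nat.floor_natCast _
  have hst : Filter.Tendsto s Filter.atTop (nhds t) := by
    have h2n : Filter.Tendsto (fun n : ℕ => (1:ℝ) / 2 ^ n) Filter.atTop (nhds 0) := by
      have : Filter.Tendsto (fun n : ℕ => ((2:ℝ)⁻¹) ^ n) Filter.atTop (nhds 0) :=
        tendsto_pow_atTop_nhds_zero_of_lt_one (by norm_num) (by norm_num)
      simpa [one_div, inv_pow] using this
    apply tendsto_of_tendsto_of_tendsto_of_le_of_le
      (g := fun n : ℕ => t - 1 / 2 ^ n) (h := fun _ : ℕ => t)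
    · simpa using tendsto_const_nhds.sub h2n
    · exact tendsto_const_nhds
    · intro n
      have hpow : (0:ℝ) < 2 ^ n := by positivity
      rw [hs]
      simp only
      rw [le_div_iff₀ hpow]
      have e : (t - 1 / 2 ^ n) * 2 ^ n = t * 2 ^ n - 1 := by field_simp
      rw [e]
      linarith [hfloor_gt n]
    · intro n
      have hpow : (0:ℝ) < 2 ^ n := by positivity
      rw [hs]
      simp only
      rw [div_le_iff₀ hpow]
      exact hfloor_le n
  have hx : Filter.Tendsto (fun n => s n • f + (1 - s n) • g) Filter.atTop
      (nhds (t • f + (1 - t) • g)) :=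
    (hst.smul_const f).add ((tendsto_const_nhds.sub hst).smul_const g)
  have hLHS := lsc_le_liminf_seq hE hx
  have hRHS : Filter.Tendsto
      (fun n => ENNReal.ofReal (s n) * E f + ENNReal.ofReal (1 - s n) * E g)
      Filter.atTop (nhds (ENNReal.ofReal t * E f + ENNReal.ofReal (1 - t) * E g)) := by
    apply Filter.Tendsto.add
    · exact ENNReal.Tendsto.mul_const (ENNReal.tendsto_ofReal hst) (Or.inr hf)
    · exact ENNReal.Tendsto.mul_const (ENNReal.tendsto_ofReal (tendsto_const_nhds.sub hst))
        (Or.inr hg)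
  refine hLHS.trans (le_trans ?_ (le_of_eq hRHS.liminf_eq))
  exact Filter.liminf_le_liminf (Filter.Eventually.of_forall fun n => dy n ⌊t * 2 ^ n⌋₊ (hsk n) f g)

end Convexity
theorem convex_of_compatible_abs_and_Calpha {X : Type*} [MeasurableSpace X]
    (μ : Measure X) (E : Lp ℝ 2 μ → ℝ≥0∞) (hE : LowerSemicontinuous E)
    (habs : ∀ (h : LipschitzWith 1 (fun x : ℝ => |x|))
        (h0 : (fun x : ℝ => |x|) 0 = 0),
      ∀ f g : Lp ℝ 2 μ,
        E (f + h.compLp h0 g) + E (f - h.compLp h0 g) ≤ E (f + g) + E (f - g))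
    (hCα : ∀ α : ℝ, 0 ≤ α →
      ∀ (h : LipschitzWith 1 (fun x : ℝ => max (-α - x) (min x (α - x))))
        (h0 : (fun x : ℝ => max (-α - x) (min x (α - x))) 0 = 0),
      ∀ f g : Lp ℝ 2 μ,
        E (f + h.compLp h0 g) + E (f - h.compLp h0 g) ≤ E (f + g) + E (f - g)) :
    ∀ f g : Lp ℝ 2 μ, ∀ t : ℝ, 0 ≤ t → t ≤ 1 →
      E (t • f + (1 - t) • g) ≤ ENNReal.ofReal t * E f + ENNReal.ofReal (1 - t) * E g := by
  intro f g t ht0 ht1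
  have hmid : ∀ u v : Lp ℝ 2 μ,
      E ((2⁻¹:ℝ) • (u + v)) + E ((2⁻¹:ℝ) • (u + v)) ≤ E u + E v := by
    intro u v
    have key := zero_compat μ E hE hCα ((2⁻¹:ℝ) • (u + v)) ((2⁻¹:ℝ) • (u - v))
    have e1 : (2⁻¹:ℝ) • (u + v) + (2⁻¹:ℝ) • (u - v) = u := by module
    have e2 : (2⁻¹:ℝ) • (u + v) - (2⁻¹:ℝ) • (u - v) = v := by module
    rwa [e1, e2] at key
  exact convex_of_lsc_midpoint E hE hmid f g t ht0 ht1
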